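/- Let H = H_{2s+1} only (s ≥ 1) and let [x_p]_{2t+3} ∈ E_{2t+3}^{p,q} with t = ls−1 for some l ≥ 2, and let x_{p+2is}^{(l−1)} (1 ≤ i ≤ l−1) be forms as produced by the cup-product description of d_{2t+3}. Then the collection B = (a_{i,j}) defined by a_{i,j} = 0 for 1 ≤ i < j ≤ l, a_{i,i} = H_{2s+1} for 1 ≤ i ≤ l, a_{l+1,l+1} = x_p, and a_{i,l+1} = (−1)^{l+1−i} x_{p+2(l+1−i)s}^{(l−1)} for 2 ≤ i ≤ l, is a defining system for the (l+1)-fold Massey product ⟨H_{2s+1},...,H_{2s+1},x_p⟩ (with l copies of H_{2s+1}). -/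
import Mathlib


section MasseySetup

variable {W : Type} [Ring W] [Algebra ℝ W]

/-- The degree `r_i + r_{i+1} + ⋯ + r_j - j + i` of the entry `a_{i,j}` of a defining system. -/
def masseyDeg (rdeg : ℕ → ℤ) (i j : ℕ) : ℤ := (∑ k ∈ Finset.Icc i j, rdeg k) - j + i

/-- The sign occurring in `ā_{i,j} = (-1)^{1 + deg a_{i,j}} a_{i,j}`. -/
noncomputable def barSign (rdeg : ℕ → ℤ) (i j : ℕ) : ℝ := (-1 : ℝ) ^ (1 + masseyDeg rdeg i j)

/-- `a = (a_{i,j})`, `1 ≤ i ≤ j ≤ m`, `(i,j) ≠ (1,m)`, is a defining system for the `m`-fold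
Massey product `⟨z_1, …, z_m⟩` (with `z_i` of degree `rdeg i`):  `a_{i,j}` has degree
`r_i + ⋯ + r_j - j + i`, `a_{i,i} = z_i`, and `d a_{i,j} = ∑_{r=i}^{j-1} ā_{i,r} ∧ a_{r+1,j}`. -/
def IsDefiningSystem (A : ℤ → Submodule ℝ W) (d : W →ₗ[ℝ] W) (m : ℕ) (rdeg : ℕ → ℤ)
    (z : ℕ → W) (a : ℕ → ℕ → W) : Prop :=
  (∀ i j : ℕ, 1 ≤ i → i ≤ j → j ≤ m → (i, j) ≠ (1, m) → a i j ∈ A (masseyDeg rdeg i j)) ∧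
  (∀ i : ℕ, 1 ≤ i → i ≤ m → a i i = z i) ∧
  (∀ i j : ℕ, 1 ≤ i → i ≤ j → j ≤ m → (i, j) ≠ (1, m) →
    d (a i j) = ∑ r ∈ Finset.Icc i (j - 1), (barSign rdeg i r • a i r) * a (r + 1) j)

/-- The related cocycle `c(a) = ∑_{r=1}^{m-1} ā_{1,r} ∧ a_{r+1,m}` of a defining system. -/
noncomputable def relatedCocycle (rdeg : ℕ → ℤ) (m : ℕ) (a : ℕ → ℕ → W) : W :=
  ∑ r ∈ Finset.Icc 1 (m - 1), (barSign rdeg 1 r • a 1 r) * a (r + 1) m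

end MasseySetup

/-- Lemma 5.6(2) of the paper. Let `H = H_{2s+1}` only (`s ≥ 1`) and let
`x` be a closed `p`-form representing a class `[x_p]_{2t+3} ∈ E_{2t+3}^{p,q}` with
`t = l s - 1`, `l ≥ 2`, and let `w i = x_{p+2is}^{(l-1)}` (`1 ≤ i ≤ l-1`) be forms as
produced by the cup-product description of `d_{2t+3}` (the equations `heq`). Then the
collection `a` defined by `a_{i,j} = 0` (`1 ≤ i < j ≤ l`), `a_{i,i} = H_{2s+1}`
(`1 ≤ i ≤ l`), `a_{l+1,l+1} = x`, and `a_{i,l+1} = (-1)^{l+1-i} x_{p+2(l+1-i)s}^{(l-1)}`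
(`2 ≤ i ≤ l`) is a defining system for the `(l+1)`-fold Massey product
`⟨H_{2s+1}, …, H_{2s+1}, x_p⟩` (with `l` copies of `H_{2s+1}`). -/
theorem defining_system_from_cup_product_description_single_twist {W : Type}
    [Ring W] [Algebra ℝ W]
    (n : ℕ) (A : ℤ → Submodule ℝ W) [DirectSum.Decomposition A]
    (hbound : ∀ i : ℤ, i < 0 ∨ (n : ℤ) < i → A i = ⊥)
    (hmul : ∀ (i j : ℤ) (x y : W), x ∈ A i → y ∈ A j → x * y ∈ A (i + j))
    (d : W →ₗ[ℝ] W)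
    (hdmem : ∀ i : ℤ, ∀ x ∈ A i, d x ∈ A (i + 1))
    (hd2 : ∀ x : W, d (d x) = 0)
    (hleib : ∀ (i : ℤ) (x y : W), x ∈ A i →
      d (x * y) = d x * y + ((-1 : ℝ) ^ i) • (x * d y))
    (hgcomm : ∀ (i j : ℤ) (x y : W), x ∈ A i → y ∈ A j →
      x * y = ((-1 : ℝ) ^ (i * j)) • (y * x))
    (s : ℕ) (hs : 1 ≤ s) (Hs : W)
    (hHsmem : Hs ∈ A (2 * (s : ℤ) + 1)) (hHscl : d Hs = 0)
    (D : W →ₗ[ℝ] W) (hD : ∀ w : W, D w = d w + Hs * w)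
    (l : ℕ) (hl : 2 ≤ l) (t : ℕ) (htl : t + 1 = l * s) (p : ℤ)
    (x : W) (hxp : x ∈ A p) (hxd : d x = 0)
    (w : ℕ → W) (hw0 : w 0 = x)
    (hwm : ∀ i : ℕ, 1 ≤ i → i ≤ l - 1 → w i ∈ A (p + 2 * i * s))
    (heq : ∀ m : ℕ, 1 ≤ m → m ≤ l - 1 → d (w m) + Hs * w (m - 1) = 0)
    (a : ℕ → ℕ → W)
    (ha0 : ∀ i j : ℕ, 1 ≤ i → i < j → j ≤ l → a i j = 0)
    (ha1 : ∀ i : ℕ, 1 ≤ i → i ≤ l → a i i = Hs)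
    (ha2 : ∀ i : ℕ, 2 ≤ i → i ≤ l → a i (l + 1) = ((-1 : ℝ) ^ (l + 1 - i)) • w (l + 1 - i))
    (ha3 : a (l + 1) (l + 1) = x) :
    IsDefiningSystem A d (l + 1) (fun i => if i ≤ l then 2 * (s : ℤ) + 1 else p)
      (fun i => if i ≤ l then Hs else x) a := by
  set rdeg : ℕ → ℤ := fun i => if i ≤ l then 2 * (s : ℤ) + 1 else p with hrdeg
  -- Hs * Hs = 0
  have hHs2 : Hs * Hs = 0 := by
    have h := hgcomm _ _ Hs Hs hHsmem hHsmem
    have hodd : Odd ((2 * (s : ℤ) + 1) * (2 * (s : ℤ) + 1)) :=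
      (odd_two_mul_add_one _).mul (odd_two_mul_add_one _)
    rw [hodd.neg_one_zpow, neg_one_smul] at h
    have h2 : (2 : ℝ) • (Hs * Hs) = 0 := by
      rw [two_smul]
      nth_rewrite 1 [h]
      exact neg_add_cancel _
    calc Hs * Hs = ((2 : ℝ)⁻¹ * 2) • (Hs * Hs) := by norm_num
    _ = (2 : ℝ)⁻¹ • ((2 : ℝ) • (Hs * Hs)) := mul_smul _ _ _
    _ = 0 := by rw [h2, smul_zero]
  have hdiag : ∀ i : ℕ, masseyDeg rdeg i i = rdeg i := by
    intro i
    simp [masseyDeg]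
  have hrd_le : ∀ i : ℕ, i ≤ l → rdeg i = 2 * (s : ℤ) + 1 := by
    intro i hi; simp [hrdeg, hi]
  have hrd_top : rdeg (l + 1) = p := by
    simp [hrdeg]
  have hdeg_top : ∀ i : ℕ, 2 ≤ i → i ≤ l →
      masseyDeg rdeg i (l + 1) = p + 2 * ((l + 1 - i : ℕ) : ℤ) * s := by
    intro i h2 hil
    have hsum : ∑ k ∈ Finset.Icc i (l + 1), rdeg k
        = ((l + 1 - i : ℕ) : ℤ) * (2 * (s : ℤ) + 1) + p := by
      rw [Finset.sum_Icc_succ_top (by omega : i ≤ l + 1), hrd_top]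
      have h1 : ∀ k ∈ Finset.Icc i l, rdeg k = 2 * (s : ℤ) + 1 := by
        intro k hk
        exact hrd_le k (Finset.mem_Icc.mp hk).2
      rw [Finset.sum_congr rfl h1, Finset.sum_const, Nat.card_Icc, nsmul_eq_mul]
    have hc : ((l + 1 - i : ℕ) : ℤ) = (l : ℤ) + 1 - (i : ℤ) := by omega
    rw [masseyDeg, hsum, hc]
    push_cast
    ring
  have hbar : ∀ i : ℕ, i ≤ l → barSign rdeg i i = 1 := by
    intro i hi
    have he : (1 + masseyDeg rdeg i i) = 2 * ((s : ℤ) + 1) := by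
      rw [hdiag, hrd_le i hi]; ring
    rw [barSign, he, zpow_mul]
    norm_num
  refine ⟨?_, ?_, ?_⟩
  · -- membership
    intro i j hi hij hjm hne
    rcases eq_or_lt_of_le hij with rfl | hlt
    · by_cases hil : i ≤ l
      · rw [ha1 i hi hil, hdiag, hrd_le i hil]
        exact hHsmem
      · have hieq : i = l + 1 := by omega
        rw [hieq, ha3, hdiag, hrd_top]
        exact hxp
    · by_cases hjl : j ≤ l
      · rw [ha0 i j hi hlt hjl]
        exact zero_mem _
      · have hj : j = l + 1 := by omega
        subst hj
        have hi2 : 2 ≤ i := by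
          have : i ≠ 1 := fun h => hne (by rw [h])
          omega
        have hil : i ≤ l := by omega
        rw [ha2 i hi2 hil, hdeg_top i hi2 hil]
        exact Submodule.smul_mem _ _ (hwm (l + 1 - i) (by omega) (by omega))
  · -- diagonal values
    intro i hi him
    show a i i = if i ≤ l then Hs else x
    by_cases hil : i ≤ l
    · rw [ha1 i hi hil, if_pos hil]
    · rw [if_neg hil, show i = l + 1 by omega, ha3]
  · -- differential equation
    intro i j hi hij hjm hne
    rcases eq_or_lt_of_le hij with rfl | hlt
    · rw [show Finset.Icc i (i - 1) = ∅ from Finset.Icc_eq_empty (by omega),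
        Finset.sum_empty]
      by_cases hil : i ≤ l
      · rw [ha1 i hi hil, hHscl]
      · rw [show i = l + 1 by omega, ha3, hxd]
    · by_cases hjl : j ≤ l
      · rw [ha0 i j hi hlt hjl, map_zero]
        symm
        apply Finset.sum_eq_zero
        intro r hr
        simp only [Finset.mem_Icc] at hr
        rcases eq_or_lt_of_le hr.1 with rfl | hir
        · rcases eq_or_lt_of_le (show i + 1 ≤ j by omega) with hj1 | hj1
          · rw [← hj1, ha1 i hi (by omega), ha1 (i + 1) (by omega) (by omega),
              smul_mul_assoc, hHs2, smul_zero]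
          · rw [ha0 (i + 1) j (by omega) hj1 hjl, mul_zero]
        · rw [ha0 i r hi hir (by omega), smul_zero, zero_mul]
      · have hj : j = l + 1 := by omega
        subst hj
        have hi2 : 2 ≤ i := by
          have : i ≠ 1 := fun h => hne (by rw [h])
          omega
        have hil : i ≤ l := by omega
        have hdw : d (w (l + 1 - i)) = -(Hs * w (l - i)) := by
          have h := heq (l + 1 - i) (by omega) (by omega)
          rw [show l + 1 - i - 1 = l - i by omega] at h
          exact eq_neg_of_add_eq_zero_left h
        rw [ha2 i hi2 hil, map_smul, hdw,
          show l + 1 - 1 = l from rfl,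
          Finset.sum_eq_single_of_mem i (Finset.mem_Icc.mpr ⟨le_refl i, hil⟩)
            (by
              intro r hr hri
              simp only [Finset.mem_Icc] at hr
              rw [ha0 i r hi (lt_of_le_of_ne hr.1 (Ne.symm hri)) hr.2, smul_zero,
                zero_mul]),
          ha1 i hi hil, hbar i hil, one_smul]
        rcases eq_or_lt_of_le hil with hie | hilt
        · subst hie
          rw [ha3, ← hw0]
          simp
        · rw [ha2 (i + 1) (by omega) (by omega),
            show l + 1 - (i + 1) = l - i by omega, mul_smul_comm,
            show l + 1 - i = (l - i) + 1 by omega, pow_succ, mul_neg_one,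
            neg_smul, smul_neg, neg_neg]
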